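/- Let k ≥ 2 and r ≥ 2 be integers, let H be a k-bounded hypergraph, and let G = K_r be the complete graph on r vertices (viewed as a 2-uniform hypergraph), with V(G) disjoint from V(H). Then G ⋉ H is a (k+1)-bounded hypergraph, ν(G ⋉ H) ≤ r, and G ⋉ H is r-colorable if and only if H is r-colorable. -/

import Mathlib

open Finset

/-- `(V, E)` is a hypergraph: every edge is a nonempty subset of `V`. -/
def IsHypergraph {α : Type*} (V : Finset α) (E : Finset (Finset α)) : Prop :=
  ∀ e ∈ E, e ⊆ V ∧ e.Nonempty

/-- A matching: a set of pairwise disjoint edges. -/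
def IsMatching {α : Type*} (M : Finset (Finset α)) : Prop :=
  ∀ e ∈ M, ∀ f ∈ M, e ≠ f → Disjoint e f

/-- `ν(G) ≤ s`: every matching consisting of edges of `E` has at most `s` edges. -/
def MatchNumLE {α : Type*} (E : Finset (Finset α)) (s : ℕ) : Prop :=
  ∀ M ⊆ E, IsMatching M → M.card ≤ s

/-- An edge `e` is monochromatic under the coloring `c`. -/
def Mono {α : Type*} (e : Finset α) {r : ℕ} (c : α → Fin r) : Prop :=
  ∃ i, ∀ v ∈ e, c v = i

/-- `c` is a proper coloring of the hypergraph with edge set `E`: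
no edge is monochromatic. -/
def IsColoring {α : Type*} (E : Finset (Finset α)) {r : ℕ} (c : α → Fin r) : Prop :=
  ∀ e ∈ E, ¬ Mono e c

/-- The hypergraph with edge set `E` is `r`-colorable. -/
def HColorable {α : Type*} (E : Finset (Finset α)) (r : ℕ) : Prop :=
  ∃ c : α → Fin r, IsColoring E c

/-- The edge set of `G ⋉ H`: the edges of `G` together with all sets `e ∪ {x}`
for `e` an edge of `H` and `x` a vertex of `G`. -/
def ltimesEdges {α : Type*} [DecidableEq α] (VG : Finset α)
    (EG EH : Finset (Finset α)) : Finset (Finset α) :=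
  EG ∪ (EH ×ˢ VG).image (fun p => insert p.2 p.1)

/-- Let `H` be a `k`-bounded hypergraph and `G = K_r` the complete graph on `r`
vertices (as a 2-uniform hypergraph), with disjoint vertex sets. Then `G ⋉ H`
is `(k+1)`-bounded, `ν(G ⋉ H) ≤ r`, and `G ⋉ H` is `r`-colorable iff `H` is
`r`-colorable. -/
theorem ltimes_complete_graph {α : Type*} [DecidableEq α] (k r : ℕ)
    (hk : 2 ≤ k) (hr : 2 ≤ r)
    (VG VH : Finset α) (EH : Finset (Finset α))
    (hH : IsHypergraph VH EH) (hbdd : ∀ e ∈ EH, e.card ≤ k)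
    (hcard : VG.card = r)
    (hdisj : Disjoint VG VH) :
    (∀ e ∈ ltimesEdges VG (VG.powersetCard 2) EH, e.card ≤ k + 1) ∧
    MatchNumLE (ltimesEdges VG (VG.powersetCard 2) EH) r ∧
    (HColorable (ltimesEdges VG (VG.powersetCard 2) EH) r ↔ HColorable EH r) := by
  classical
  have hVGne : VG.Nonempty := Finset.card_pos.mp (by omega)
  have hmem : ∀ e ∈ ltimesEdges VG (VG.powersetCard 2) EH,
      (e ⊆ VG ∧ e.card = 2) ∨ ∃ f ∈ EH, ∃ x ∈ VG, e = insert x f := by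
    intro e he
    rw [ltimesEdges, Finset.mem_union] at he
    rcases he with h | h
    · left; rw [Finset.mem_powersetCard] at h; exact h
    · right
      simp only [Finset.mem_image, Finset.mem_product] at h
      obtain ⟨⟨f, x⟩, ⟨hf, hx⟩, rfl⟩ := h
      exact ⟨f, hf, x, hx, rfl⟩
  have hmem2 : ∀ f ∈ EH, ∀ x ∈ VG, insert x f ∈ ltimesEdges VG (VG.powersetCard 2) EH := by
    intro f hf x hx
    rw [ltimesEdges, Finset.mem_union]
    right
    exact Finset.mem_image.mpr ⟨(f, x), Finset.mem_product.mpr ⟨hf, hx⟩, rfl⟩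
  refine ⟨?_, ?_, ?_⟩
  · intro e he
    rcases hmem e he with ⟨_, h2⟩ | ⟨f, hf, x, hx, rfl⟩
    · omega
    · calc (insert x f).card ≤ f.card + 1 := Finset.card_insert_le _ _
        _ ≤ k + 1 := by have := hbdd f hf; omega
  · intro M hM hmatch
    have hpick : ∀ e ∈ M, (e ∩ VG).Nonempty := by
      intro e he
      rcases hmem e (hM he) with ⟨hsub, h2⟩ | ⟨f, hf, x, hx, rfl⟩
      · rw [Finset.inter_eq_left.mpr hsub]
        exact Finset.card_pos.mp (by omega)
      · exact ⟨x, Finset.mem_inter.mpr ⟨Finset.mem_insert_self _ _, hx⟩⟩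
    calc M.card ≤ VG.card := by
          apply Finset.card_le_card_of_injOn
            (fun e => if h : (e ∩ VG).Nonempty then h.choose else hVGne.choose)
          · intro e he
            dsimp only; rw [dif_pos (hpick e he)]
            exact (Finset.mem_inter.mp (hpick e he).choose_spec).2
          · intro e he f hf heq
            by_contra hne
            have hd := hmatch e he f hf hne
            simp only at heq
            rw [dif_pos (hpick e he), dif_pos (hpick f hf)] at heq
            have h1 := (Finset.mem_inter.mp (hpick e he).choose_spec).1
            have h2 := (Finset.mem_inter.mp (hpick f hf).choose_spec).1
            rw [heq] at h1
            exact Finset.disjoint_left.mp hd h1 h2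
      _ = r := hcard
  · constructor
    · rintro ⟨c, hc⟩
      refine ⟨c, fun e he hmono => ?_⟩
      obtain ⟨i, hi⟩ := hmono
      -- c is injective on VG
      have hinj : Set.InjOn c VG := by
        intro x hx y hy hxy
        by_contra hne
        have hpair : ({x, y} : Finset α) ∈ ltimesEdges VG (VG.powersetCard 2) EH := by
          rw [ltimesEdges, Finset.mem_union]
          left
          rw [Finset.mem_powersetCard]
          constructor
          · intro v hv
            rcases Finset.mem_insert.mp hv with rfl | hv
            · exact hx
            · rw [Finset.mem_singleton.mp hv]; exact hy
          · rw [Finset.card_insert_of_notMem (by simpa using hne), Finset.card_singleton]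
        exact hc _ hpair ⟨c x, by intro v hv; rcases Finset.mem_insert.mp hv with rfl | hv
                                  · rfl
                                  · rw [Finset.mem_singleton.mp hv]; exact hxy.symm⟩
      -- c hits every color on VG
      have hsurj : ∃ x ∈ VG, c x = i := by
        have himg : (VG.image c).card = r := by
          rw [Finset.card_image_of_injOn hinj, hcard]
        have : VG.image c = Finset.univ := by
          apply Finset.eq_of_subset_of_card_le (Finset.subset_univ _)
          rw [himg, Finset.card_univ, Fintype.card_fin]
        have : i ∈ VG.image c := by rw [this]; exact Finset.mem_univ i
        simpa using this
      obtain ⟨x, hx, hcx⟩ := hsurj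
      apply hc _ (hmem2 e he x hx)
      refine ⟨i, fun v hv => ?_⟩
      rcases Finset.mem_insert.mp hv with rfl | hv
      · exact hcx
      · exact hi v hv
    · rintro ⟨c, hc⟩
      have hequiv := VG.equivFinOfCardEq hcard
      refine ⟨fun v => if h : v ∈ VG then hequiv ⟨v, h⟩ else c v, fun e he hmono => ?_⟩
      obtain ⟨i, hi⟩ := hmono
      rcases hmem e he with ⟨hsub, h2⟩ | ⟨f, hf, x, hx, rfl⟩
      · obtain ⟨x, y, hxy, rfl⟩ := Finset.card_eq_two.mp h2
        have hx : x ∈ VG := hsub (Finset.mem_insert_self _ _)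
        have hy : y ∈ VG := hsub (by simp)
        have e1 := hi x (Finset.mem_insert_self _ _)
        have e2 := hi y (by simp)
        simp only [dif_pos hx] at e1
        simp only [dif_pos hy] at e2
        have : (⟨x, hx⟩ : VG) = ⟨y, hy⟩ := hequiv.injective (by rw [e1, e2])
        exact hxy (congrArg Subtype.val this)
      · apply hc f hf
        refine ⟨i, fun v hv => ?_⟩
        have hvVH : v ∈ VH := (hH f hf).1 hv
        have hvnG : v ∉ VG := fun h => Finset.disjoint_left.mp hdisj h hvVH
        have := hi v (Finset.mem_insert_of_mem hv)
        simp only [dif_neg hvnG] at this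
        exact this
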